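/- Suppose (P*, λ*, μ*) is a KKT triple for the ED problem, P*_i > 0 for at least two distinct indices, and b* ∈ ℝ^n satisfies λ* ≤ b*_j ≤ C_j'(P*_j) for all j. Fix a generator i and a deviating bid b_i > b*_i. Then every optimizer P of the ISO problem for bids (b_i, b*_{-i}) satisfies P_i = 0, and consequently Π_i(b_i, P_i) = −C_i(0) ≤ Π_i(b*_i, P*_i) = b*_i P*_i − C_i(P*_i). -/

import Mathlib

open Finset

noncomputable section

/-- Feasible production profiles for the dispatch problems:
power balance `1ᵀP = 1ᵀP_d` and componentwise nonnegativity. -/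
def Feasible {n : ℕ} (Pd P : Fin n → ℝ) : Prop :=
  (∑ i, P i = ∑ i, Pd i) ∧ ∀ i, 0 ≤ P i

/-- `P` is an optimizer of the ISO problem for bids `b`:
it minimizes `bᵀP` over the feasible set. -/
def IsISOOpt {n : ℕ} (Pd b P : Fin n → ℝ) : Prop :=
  Feasible Pd P ∧ ∀ Q, Feasible Pd Q → ∑ i, b i * P i ≤ ∑ i, b i * Q i

/-- `P` is a minimizer of the economic dispatch (ED) problem. -/
def IsEDOpt {n : ℕ} (C : Fin n → ℝ → ℝ) (Pd P : Fin n → ℝ) : Prop :=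
  Feasible Pd P ∧ ∀ Q, Feasible Pd Q → ∑ i, C i (P i) ≤ ∑ i, C i (Q i)

/-- `(P, lam, mu)` is a KKT triple for the ED problem, with `C' i` the marginal
cost of generator `i`. -/
def IsKKT {n : ℕ} (C' : Fin n → ℝ → ℝ) (Pd P : Fin n → ℝ) (lam : ℝ)
    (mu : Fin n → ℝ) : Prop :=
  (∀ i, C' i (P i) = lam + mu i) ∧ (∑ i, P i = ∑ i, Pd i) ∧
    (∀ i, 0 ≤ P i) ∧ (∀ i, 0 ≤ mu i) ∧ (∑ i, P i * mu i = 0)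

/-- Payoff of a generator with cost `Ci` bidding `bi` and producing `Pi`. -/
def Payoff (Ci : ℝ → ℝ) (bi Pi : ℝ) : ℝ := Pi * bi - Ci Pi

/-- `bstar` is a Nash equilibrium of the inelastic electricity market game. -/
def IsNash {n : ℕ} (C : Fin n → ℝ → ℝ) (Pd bstar : Fin n → ℝ) : Prop :=
  (∀ i, 0 ≤ bstar i) ∧
  ∃ P0, IsISOOpt Pd bstar P0 ∧
    ∀ i (bi : ℝ), 0 ≤ bi → bi ≠ bstar i →
      ∀ P, IsISOOpt Pd (Function.update bstar i bi) P →
        Payoff (C i) bi (P i) ≤ Payoff (C i) (bstar i) (P0 i)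

/-- `bstar` is an efficient bid: the optimizer of the ED problem is also an
optimizer of the ISO problem for bids `bstar`, and each `Pstar i` maximizes
the profit `P ↦ P * bstar i - C i P` over `P ≥ 0`. -/
def IsEfficientBid {n : ℕ} (C : Fin n → ℝ → ℝ) (Pd bstar : Fin n → ℝ) : Prop :=
  (∀ i, 0 ≤ bstar i) ∧
  ∀ Pstar, IsEDOpt C Pd Pstar →
    IsISOOpt Pd bstar Pstar ∧
      ∀ i, ∀ P, 0 ≤ P → Payoff (C i) (bstar i) P ≤ Payoff (C i) (bstar i) (Pstar i)

/-- Standing assumptions on a generator cost function: continuously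
differentiable with derivative `Cf'`, strongly convex on `[0, ∞)`, and
nonnegative marginal cost at zero. -/
def CostAssumptions (Cf Cf' : ℝ → ℝ) : Prop :=
  (∀ x, HasDerivAt Cf (Cf' x) x) ∧ Continuous Cf' ∧
    (∃ m : ℝ, 0 < m ∧
      ∀ x y, 0 ≤ x → 0 ≤ y → (Cf' x - Cf' y) * (x - y) ≥ m * (x - y) ^ 2) ∧
    0 ≤ Cf' 0

/-- `P` is the unique maximizer of the profit `Q ↦ β * Q - Cf Q` over `Q ≥ 0`. -/
def IsUniqueArgmaxProfit (Cf : ℝ → ℝ) (β P : ℝ) : Prop :=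
  0 ≤ P ∧ (∀ Q, 0 ≤ Q → β * Q - Cf Q ≤ β * P - Cf P) ∧
    ∀ Q, 0 ≤ Q → (∀ R, 0 ≤ R → β * R - Cf R ≤ β * Q - Cf Q) → Q = P

/-- Under a KKT triple with at least two strictly producing
generators and an efficient-interval bid profile `bstar`, if generator `i`
deviates to a bid `bi > bstar i`, then every optimizer `P` of the ISO problem
for bids `(bi, bstar_{-i})` satisfies `P i = 0`, and consequently
`Π_i(bi, P i) = -C_i(0) ≤ Π_i(bstar i, Pstar i) = bstar i * Pstar i - C_i(Pstar i)`. -/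
theorem higher_bid_no_gain {n : ℕ} (hn : 2 ≤ n)
    (C C' : Fin n → ℝ → ℝ) (hC : ∀ i, CostAssumptions (C i) (C' i))
    (Pd : Fin n → ℝ) (hPd : ∀ i, 0 ≤ Pd i) (hPdpos : 0 < ∑ i, Pd i)
    (Pstar : Fin n → ℝ) (lam : ℝ) (mu : Fin n → ℝ)
    (hKKT : IsKKT C' Pd Pstar lam mu)
    (htwo : ∃ i j, i ≠ j ∧ 0 < Pstar i ∧ 0 < Pstar j)
    (bstar : Fin n → ℝ)
    (hb : ∀ j, lam ≤ bstar j ∧ bstar j ≤ C' j (Pstar j))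
    (i : Fin n) (bi : ℝ) (hbi : bstar i < bi) :
    ∀ P, IsISOOpt Pd (Function.update bstar i bi) P →
      P i = 0 ∧ Payoff (C i) bi (P i) = -(C i 0) ∧
        Payoff (C i) bi (P i) ≤ Payoff (C i) (bstar i) (Pstar i) ∧
        Payoff (C i) (bstar i) (Pstar i) = bstar i * Pstar i - C i (Pstar i) := by
  intro P hP
  obtain ⟨hfeas, hopt⟩ := hP
  obtain ⟨hgrad, hbal, hPsnn, hmunn, hcomp⟩ := hKKT
  -- complementarity pointwise
  have hcomp' : ∀ j, Pstar j * mu j = 0 := by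
    intro j
    have h0 : ∀ j ∈ Finset.univ, (0:ℝ) ≤ Pstar j * mu j := fun j _ =>
      mul_nonneg (hPsnn j) (hmunn j)
    exact (Finset.sum_eq_zero_iff_of_nonneg h0).mp hcomp j (Finset.mem_univ j)
  have hmu0 : ∀ j, 0 < Pstar j → C' j (Pstar j) = lam := by
    intro j hj
    have : mu j = 0 := by
      have := hcomp' j
      rcases mul_eq_zero.mp this with h | h
      · exact absurd h (ne_of_gt hj)
      · exact h
    rw [hgrad j, this, add_zero]
  -- get k ≠ i with Pstar k > 0 and bstar k = lam
  obtain ⟨a, b', hab, ha, hb'⟩ := htwo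
  obtain ⟨k, hki, hk⟩ : ∃ k, k ≠ i ∧ 0 < Pstar k := by
    by_cases h : a = i
    · exact ⟨b', by rw [← h]; exact hab.symm, hb'⟩
    · exact ⟨a, h, ha⟩
  have hbk : bstar k = lam :=
    le_antisymm (le_trans (hb k).2 (le_of_eq (hmu0 k hk))) (hb k).1
  set b : Fin n → ℝ := Function.update bstar i bi with hbdef
  have hbi' : b i = bi := Function.update_self i bi bstar
  have hbk' : b k = lam := by
    rw [hbdef, Function.update_of_ne hki, hbk]
  -- P i = 0
  have hPi : P i = 0 := by
    by_contra h
    have hPipos : 0 < P i := lt_of_le_of_ne (hfeas.2 i) (Ne.symm h)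
    set Q : Fin n → ℝ := Function.update (Function.update P k (P k + P i)) i 0
      with hQdef
    have hQi : Q i = 0 := Function.update_self i 0 _
    have hQk : Q k = P k + P i := by
      rw [hQdef, Function.update_of_ne hki, Function.update_self]
    have hQj : ∀ j, j ≠ i → j ≠ k → Q j = P j := by
      intro j hji hjk
      rw [hQdef, Function.update_of_ne hji, Function.update_of_ne hjk]
    have hsum : ∀ f : Fin n → ℝ, ∑ j, f j * Q j = (∑ j, f j * P j) + (f k - f i) * P i := by
      intro f
      have h1 : ∑ j, (f j * Q j - f j * P j) = (f k - f i) * P i := by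
        rw [← Finset.sum_subset (Finset.subset_univ ({i, k} : Finset (Fin n)))]
        · rw [Finset.sum_pair hki.symm, hQi, hQk]
          ring
        · intro j _ hj
          simp only [Finset.mem_insert, Finset.mem_singleton, not_or] at hj
          rw [hQj j hj.1 hj.2]
          ring
      have h2 : ∑ j, (f j * Q j - f j * P j) = (∑ j, f j * Q j) - ∑ j, f j * P j :=
        Finset.sum_sub_distrib _ _
      linarith [h1, h2.symm.trans h1]
    have hQfeas : Feasible Pd Q := by
      constructor
      · have := hsum (fun _ => 1)
        simp only [one_mul, sub_self, zero_mul, add_zero] at this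
        rw [this, hfeas.1]
      · intro j
        by_cases hji : j = i
        · rw [hji, hQi]
        · by_cases hjk : j = k
          · rw [hjk, hQk]; exact add_nonneg (hfeas.2 k) (le_of_lt hPipos)
          · rw [hQj j hji hjk]; exact hfeas.2 j
    have := hopt Q hQfeas
    rw [hsum b] at this
    have hlt : b k - b i < 0 := by
      rw [hbk', hbi']
      linarith [(hb i).1]
    nlinarith
  refine ⟨hPi, ?_, ?_, ?_⟩
  · rw [hPi]; simp [Payoff]
  · -- -(C i 0) ≤ bstar i * Pstar i - C i (Pstar i)
    rw [hPi]
    simp only [Payoff, zero_mul, zero_sub]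
    rcases lt_or_eq_of_le (hPsnn i) with hpos | heq
    · -- Pstar i > 0, bstar i = lam = C' i (Pstar i)
      have hci : C' i (Pstar i) = lam := hmu0 i hpos
      have hbil : bstar i = lam :=
        le_antisymm (le_trans (hb i).2 (le_of_eq hci)) (hb i).1
      obtain ⟨hderiv, hcont', ⟨m, hm, hsc⟩, hC0⟩ := hC i
      have hcont : ContinuousOn (C i) (Set.Icc 0 (Pstar i)) :=
        (continuous_iff_continuousAt.mpr fun x => (hderiv x).continuousAt).continuousOn
      obtain ⟨c, hc, hslope⟩ := exists_hasDerivAt_eq_slope (C i) (C' i) hpos hcont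
        (fun x _ => hderiv x)
      have hc0 : 0 ≤ c := le_of_lt hc.1
      have hmono : C' i c ≤ C' i (Pstar i) := by
        have := hsc (Pstar i) c (le_of_lt hpos) hc0
        nlinarith [hc.2, sq_nonneg (Pstar i - c)]
      have hslope' : C i (Pstar i) - C i 0 = C' i c * Pstar i := by
        field_simp at hslope
        linarith [hslope]
      have : C i (Pstar i) - C i 0 ≤ lam * Pstar i := by
        rw [hslope']
        have := mul_le_mul_of_nonneg_right hmono (le_of_lt hpos)
        rw [hci] at this
        linarith
      rw [hbil]
      nlinarith
    · rw [← heq]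
      simp
  · simp [Payoff]; ring
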